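/- Let H be a Krein space with canonical decomposition H = H⁻[⊕]H⁺ and canonical symmetry J, let T be a closed symmetric linear relation in H with H⁻ ⊆ D_T, and let T₀ be a dissipative linear relation in H with T ⊆ T₀. Then ℂ⁻ ∩ σ_p(T₀) ⊆ ℂ⁻ ∩ C_T, where ℂ⁻ = {λ ∈ ℂ : Im λ < 0}. -/

import Mathlib

open Complex

noncomputable section

variable {H : Type*} [NormedAddCommGroup H] [InnerProductSpace ℂ H] [CompleteSpace H]

/-- Indefinite inner product `[x,y] = ⟪x, J y⟫`. -/
def kip (J : H →L[ℂ] H) (x y : H) : ℂ := inner ℂ x (J y)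

/-- `H⁻ = ker (J + id)`. -/
def negSet (J : H →L[ℂ] H) : Set H := {x | J x = -x}

/-- `H⁺ = ker (J - id)`. -/
def posSet (J : H →L[ℂ] H) : Set H := {x | J x = x}

/-- The canonical projection `P⁻ = (id - J)/2` onto `H⁻`. -/
def Pm (J : H →L[ℂ] H) (x : H) : H := (2⁻¹ : ℂ) • (x - J x)

/-- The canonical projection `P⁺ = (id + J)/2` onto `H⁺`. -/
def Pp (J : H →L[ℂ] H) (x : H) : H := (2⁻¹ : ℂ) • (x + J x)

/-- `J` is a fundamental symmetry: self-adjoint and an involution. -/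
structure IsFundSym (J : H →L[ℂ] H) : Prop where
  symm : ∀ x y : H, (inner ℂ (J x) y : ℂ) = inner ℂ x (J y)
  invol : ∀ x : H, J (J x) = x

def domSet (A : Set (H × H)) : Set H := {x | ∃ y, (x, y) ∈ A}
def ranSet (A : Set (H × H)) : Set H := {y | ∃ x, (x, y) ∈ A}
def mulSet (A : Set (H × H)) : Set H := {y | ((0 : H), y) ∈ A}
def kerl (A : Set (H × H)) (l : ℂ) : Set H := {x | (x, l • x) ∈ A}
def pointSpec (A : Set (H × H)) : Set ℂ := {l | ∃ x : H, x ≠ 0 ∧ (x, l • x) ∈ A}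
/-- The relation `A - l·I`. -/
def shiftRel (A : Set (H × H)) (l : ℂ) : Set (H × H) := {p | ∃ q ∈ A, p = (q.1, q.2 - l • q.1)}
def invRel (A : Set (H × H)) : Set (H × H) := {p | (p.2, p.1) ∈ A}
/-- Composition `A ∘ B` (apply `B` first). -/
def relComp (A B : Set (H × H)) : Set (H × H) := {p | ∃ y, (p.1, y) ∈ B ∧ (y, p.2) ∈ A}
def imageRel (A : Set (H × H)) (M : Set H) : Set H := {y | ∃ x ∈ M, (x, y) ∈ A}
def setSum (A B : Set H) : Set H := {z | ∃ a ∈ A, ∃ b ∈ B, z = a + b}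
/-- The relation `JT = {(x, Jy) : (x,y) ∈ T}`. -/
def JRel (J : H →L[ℂ] H) (A : Set (H × H)) : Set (H × H) := {p | ∃ q ∈ A, p = (q.1, J q.2)}
/-- Krein-space adjoint `T^c`. -/
def adjRel (J : H →L[ℂ] H) (T : Set (H × H)) : Set (H × H) :=
  {q | ∀ p ∈ T, kip J q.2 p.1 = kip J q.1 p.2}
def IsSymRel (J : H →L[ℂ] H) (T : Set (H × H)) : Prop := T ⊆ adjRel J T
def IsDissipative (J : H →L[ℂ] H) (T : Set (H × H)) : Prop := ∀ p ∈ T, 0 ≤ (kip J p.1 p.2).im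
/-- The operator part `T_s = {(x,y) ∈ T : y ⟂ Ind T}`. -/
def opPart (T : Set (H × H)) : Set (H × H) :=
  {p | p ∈ T ∧ ∀ z ∈ mulSet T, (inner ℂ p.2 z : ℂ) = 0}
/-- `‖T_s P⁻‖`: norm of `x ↦ T_s x` as an operator on `H⁻`. -/
def normTsPm (J : H →L[ℂ] H) (T : Set (H × H)) : ℝ :=
  sSup {r | ∃ p ∈ opPart T, p.1 ∈ negSet J ∧ ‖p.1‖ ≤ 1 ∧ r = ‖p.2‖}
/-- `‖P⁻ T_s P⁻‖`: norm of `x ↦ P⁻(T_s x)` as an operator on `H⁻`. -/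
def normPmTsPm (J : H →L[ℂ] H) (T : Set (H × H)) : ℝ :=
  sSup {r | ∃ p ∈ opPart T, p.1 ∈ negSet J ∧ ‖p.1‖ ≤ 1 ∧ r = ‖Pm J p.2‖}
/-- The region `Γ` determined by `m = ‖T_s P⁻‖`, `c = ‖P⁻T_s P⁻‖`. -/
def GammaSet (m c : ℝ) : Set ℂ :=
  {l | l.im ≠ 0 ∧ m < |l.im| ∧
    ‖(if 0 ≤ l.re then (1 : ℂ) else -1) + (c : ℂ) / l‖ < 2 / (1 + (m / |l.im|) ^ 2)}
/-- `C = (ℂ∖ℝ) ∖ Γ`. -/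
def CSet (m c : ℝ) : Set ℂ := {l : ℂ | l.im ≠ 0} \ GammaSet m c

/-- If `s + Im (μ a + conj μ b) ≥ 0` for all `μ`, the linear part vanishes and `a = conj b`. -/
private lemma imLin_aux {s : ℝ} {a b : ℂ}
    (h : ∀ μ : ℂ, 0 ≤ s + (μ * a + (starRingEnd ℂ) μ * b).im) :
    a = (starRingEnd ℂ) b := by
  have h0 : ∀ μ : ℂ, (μ * a + (starRingEnd ℂ) μ * b).im = 0 := by
    intro μ
    by_contra hne
    set L := (μ * a + (starRingEnd ℂ) μ * b).im with hL
    have ht := h (((-(s + 1) / L : ℝ) : ℂ) * μ)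
    have hexp : (((-(s + 1) / L : ℝ) : ℂ) * μ * a
        + (starRingEnd ℂ) (((-(s + 1) / L : ℝ) : ℂ) * μ) * b)
        = ((-(s + 1) / L : ℝ) : ℂ) * (μ * a + (starRingEnd ℂ) μ * b) := by
      rw [map_mul, Complex.conj_ofReal]; ring
    rw [hexp] at ht
    have him : (((-(s + 1) / L : ℝ) : ℂ) * (μ * a + (starRingEnd ℂ) μ * b)).im
        = (-(s + 1) / L) * L := by
      rw [Complex.mul_im]; simp [← hL]
    rw [him, div_mul_cancel₀ _ hne] at ht
    linarith
  have h1 := h0 1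
  have h2 := h0 Complex.I
  simp only [one_mul, map_one, Complex.add_im, Complex.mul_im, Complex.I_re, Complex.I_im,
    Complex.conj_re, Complex.conj_im, Complex.one_re, Complex.one_im] at h1 h2
  apply Complex.ext
  · simp only [Complex.conj_re]; nlinarith [h2]
  · simp only [Complex.conj_im]; nlinarith [h1]

set_option maxHeartbeats 1000000 in
/-- Theorem 1.3 a): non-real eigenvalues in the lower half-plane of a dissipative
extension `T₀` of a closed symmetric relation `T` with `H⁻ ⊆ D_T` lie in `C_T`. -/
theorem statement1 (J : H →L[ℂ] H) (hJ : IsFundSym J)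
    (T T0 : Submodule ℂ (H × H))
    (hTclosed : IsClosed (T : Set (H × H)))
    (hTsym : IsSymRel J (T : Set (H × H)))
    (hdom : negSet J ⊆ domSet (T : Set (H × H)))
    (hsub : (T : Set (H × H)) ⊆ (T0 : Set (H × H)))
    (hdis : IsDissipative J (T0 : Set (H × H))) :
    {l : ℂ | l.im < 0} ∩ pointSpec (T0 : Set (H × H)) ⊆
      {l : ℂ | l.im < 0} ∩
        CSet (normTsPm J (T : Set (H × H))) (normPmTsPm J (T : Set (H × H))) := by
  rintro l ⟨hl, x, hx0, hxT0⟩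
  refine ⟨hl, ne_of_lt hl, fun hΓ => ?_⟩
  obtain ⟨-, hm, -⟩ := hΓ
  -- J is self-adjoint
  have hJs : ∀ u v : H, (inner ℂ (J u) v : ℂ) = inner ℂ u (J v) := hJ.symm
  -- the multivalued-part submodule
  set M : Submodule ℂ H := T.comap (LinearMap.inr ℂ H H) with hM
  have hMmem : ∀ z : H, z ∈ M ↔ ((0 : H), z) ∈ T := fun z => Iff.rfl
  have hMclosed : IsClosed (M : Set H) := by
    have : (M : Set H) = (fun z : H => ((0 : H), z)) ⁻¹' (T : Set (H × H)) := rfl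
    rw [this]
    exact hTclosed.preimage (continuous_const.prodMk continuous_id)
  haveI : CompleteSpace M := hMclosed.completeSpace_coe
  -- existence of the operator part value at each point of H⁻
  have hex : ∀ u : H, u ∈ negSet J → ∃ v, (u, v) ∈ T ∧ v ∈ Mᗮ := by
    intro u hu
    obtain ⟨y0, hy0⟩ := hdom hu
    refine ⟨y0 - (M.orthogonalProjectionOnto y0 : H), ?_,
      M.sub_starProjection_mem_orthogonal y0⟩
    have h2 : ((0 : H), (M.orthogonalProjectionOnto y0 : H)) ∈ T :=
      (hMmem _).mp (M.orthogonalProjectionOnto y0).2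
    have := T.sub_mem hy0 h2
    simpa using this
  -- uniqueness
  have huniq : ∀ (u v₁ v₂ : H), (u, v₁) ∈ T → v₁ ∈ Mᗮ → (u, v₂) ∈ T → v₂ ∈ Mᗮ → v₁ = v₂ := by
    intro u v₁ v₂ h1 h1' h2 h2'
    have hmem : v₁ - v₂ ∈ M := by
      have := T.sub_mem h1 h2
      simpa [hMmem] using this
    have hmem' : v₁ - v₂ ∈ Mᗮ := Submodule.sub_mem _ h1' h2'
    exact sub_eq_zero.mp (Submodule.disjoint_def.mp M.orthogonal_disjoint _ hmem hmem')
  -- the negative subspace as a closed submodule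
  have hHneg : ∃ N : Submodule ℂ H, (N : Set H) = negSet J := by
    refine ⟨{ carrier := negSet J
              add_mem' := ?_
              zero_mem' := by simp [negSet]
              smul_mem' := ?_ }, rfl⟩
    · intro a b ha hb
      simp only [negSet, Set.mem_setOf_eq] at *
      rw [map_add, ha, hb]; abel
    · intro c v hv
      simp only [negSet, Set.mem_setOf_eq] at *
      rw [map_smul, hv, smul_neg]
  obtain ⟨N, hN⟩ := hHneg
  have hNmem : ∀ v : H, v ∈ N ↔ J v = -v := by
    intro v; rw [show (v ∈ N) = (v ∈ (N : Set H)) from rfl, hN]; exact Iff.rfl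
  have hNclosed : IsClosed (N : Set H) := by
    rw [hN]
    have : negSet J = (fun v : H => J v + v) ⁻¹' {0} := by
      ext v; simp [negSet, eq_neg_iff_add_eq_zero]
    rw [this]
    exact (isClosed_singleton.preimage (J.continuous.add continuous_id))
  haveI : CompleteSpace N := hNclosed.completeSpace_coe
  -- the operator part as a linear map on N
  have hexN : ∀ u : N, ∃ v, ((u : H), v) ∈ T ∧ v ∈ Mᗮ := by
    intro u; exact hex (u : H) (by rw [← hN]; exact u.2)
  classical
  let f0 : N → H := fun u => Classical.choose (hexN u)
  have hf0 : ∀ u : N, ((u : H), f0 u) ∈ T ∧ f0 u ∈ Mᗮ := fun u => Classical.choose_spec (hexN u)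
  let f : N →ₗ[ℂ] H :=
    { toFun := f0
      map_add' := by
        intro u v
        refine huniq ((u : H) + (v : H)) _ _ ?_ (hf0 (u + v)).2 ?_ ?_
        · exact (hf0 (u + v)).1
        · have := T.add_mem (hf0 u).1 (hf0 v).1
          simpa using this
        · exact Submodule.add_mem _ (hf0 u).2 (hf0 v).2
      map_smul' := by
        intro c u
        refine huniq (c • (u : H)) _ _ ?_ (hf0 (c • u)).2 ?_ ?_
        · exact (hf0 (c • u)).1
        · have := T.smul_mem c (hf0 u).1
          simpa using this
        · exact Submodule.smul_mem _ _ (hf0 u).2 }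
  have hfval : ∀ (u : N) (v : H), ((u : H), v) ∈ T → v ∈ Mᗮ → f u = v := by
    intro u v h1 h2
    exact huniq (u : H) (f0 u) v (hf0 u).1 (hf0 u).2 h1 h2
  -- closed graph
  have hgraph : IsClosed (f.graph : Set (N × H)) := by
    have heq : (f.graph : Set (N × H))
        = (fun p : N × H => ((p.1 : H), p.2)) ⁻¹'
          ((T : Set (H × H)) ∩ {p : H × H | p.2 ∈ Mᗮ}) := by
      ext p
      simp only [SetLike.mem_coe, LinearMap.mem_graph_iff, Set.mem_preimage, Set.mem_inter_iff,
        Set.mem_setOf_eq]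
      constructor
      · intro hp
        rw [hp]
        exact ⟨(hf0 p.1).1, (hf0 p.1).2⟩
      · rintro ⟨h1, h2⟩
        exact (hfval p.1 p.2 h1 h2).symm
    rw [heq]
    refine IsClosed.preimage ?_ (hTclosed.inter (M.isClosed_orthogonal.preimage continuous_snd))
    exact (continuous_subtype_val.comp continuous_fst).prodMk continuous_snd
  have hfc : Continuous f := LinearMap.continuous_of_isClosed_graph f hgraph
  let F : N →L[ℂ] H := ⟨f, hfc⟩
  -- the defining set of normTsPm is bounded above by ‖F‖
  have hbdd : BddAbove {r | ∃ p ∈ opPart (T : Set (H × H)),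
      p.1 ∈ negSet J ∧ ‖p.1‖ ≤ 1 ∧ r = ‖p.2‖} := by
    refine ⟨‖F‖, ?_⟩
    rintro r ⟨p, ⟨hpT, hporth⟩, hpneg, hp1, rfl⟩
    have hpN : p.1 ∈ N := by rw [show (p.1 ∈ N) = (p.1 ∈ (N : Set H)) from rfl, hN]; exact hpneg
    have hp2orth : p.2 ∈ Mᗮ := by
      intro z hz
      have hz' : ((0 : H), z) ∈ (T : Set (H × H)) := hz
      have := hporth z hz'
      rw [← inner_conj_symm]
      rw [this, map_zero]
    have hval : f ⟨p.1, hpN⟩ = p.2 := hfval ⟨p.1, hpN⟩ p.2 hpT hp2orth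
    calc ‖p.2‖ = ‖F ⟨p.1, hpN⟩‖ := by rw [show F ⟨p.1, hpN⟩ = f ⟨p.1, hpN⟩ from rfl, hval]
    _ ≤ ‖F‖ * ‖(⟨p.1, hpN⟩ : N)‖ := F.le_opNorm _
    _ ≤ ‖F‖ * 1 := by
        have : ‖(⟨p.1, hpN⟩ : N)‖ = ‖p.1‖ := rfl
        exact mul_le_mul_of_nonneg_left (by rw [this]; exact hp1) (norm_nonneg F)
    _ = ‖F‖ := mul_one _

  -- decomposition of the eigenvector
  set xm := Pm J x with hxmdef
  set xp := Pp J x with hxpdef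
  have hJxm : J xm = -xm := by
    simp only [hxmdef, Pm, map_smul, map_sub, hJ.invol]
    rw [← smul_neg, neg_sub]
  have hJxp : J xp = xp := by
    simp only [hxpdef, Pp, map_smul, map_add, hJ.invol, add_comm]
  have hsum : xm + xp = x := by
    simp only [hxmdef, hxpdef, Pm, Pp, ← smul_add]
    rw [show x - J x + (x + J x) = (2 : ℂ) • x by rw [two_smul]; abel, smul_smul]
    norm_num
  have horth : (inner ℂ xm xp : ℂ) = 0 := by
    have h1 : (inner ℂ (J xm) xp : ℂ) = inner ℂ xm (J xp) := hJs xm xp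
    rw [hJxm, hJxp, inner_neg_left] at h1
    linear_combination -h1 / 2
  have horth' : (inner ℂ xp xm : ℂ) = 0 := by
    rw [← inner_conj_symm, horth, map_zero]
  have hJx : J x = xp - xm := by
    conv_lhs => rw [← hsum]
    rw [map_add, hJxm, hJxp]
    abel
  have hc0 : (inner ℂ x (J x) : ℂ) = ((‖xp‖ ^ 2 - ‖xm‖ ^ 2 : ℝ) : ℂ) := by
    conv_lhs => rw [hJx, ← hsum]
    rw [inner_add_left, inner_sub_right, inner_sub_right, horth, horth',
      inner_self_eq_norm_sq_to_K, inner_self_eq_norm_sq_to_K]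
    rw [show ((↑) : ℝ → ℂ) = (algebraMap ℝ ℂ : ℝ → ℂ) from Complex.coe_algebraMap.symm]
    push_cast
    ring
  have hlneg : l.im < 0 := hl
  have hdx : 0 ≤ (kip J x (l • x)).im := hdis (x, l • x) hxT0
  have hdx' : 0 ≤ l.im * (‖xp‖ ^ 2 - ‖xm‖ ^ 2) := by
    have h2 : kip J x (l • x) = l * ((‖xp‖ ^ 2 - ‖xm‖ ^ 2 : ℝ) : ℂ) := by
      rw [kip, map_smul, inner_smul_right, hc0]
    rw [h2, Complex.mul_im, Complex.ofReal_re, Complex.ofReal_im, mul_zero, zero_add] at hdx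
    exact hdx
  have hple : ‖xp‖ ^ 2 ≤ ‖xm‖ ^ 2 := by nlinarith [hdx', hlneg]
  have hxm0 : xm ≠ 0 := by
    intro h
    have hxpn : ‖xp‖ = 0 := by
      rw [h, norm_zero] at hple
      nlinarith [norm_nonneg xp]
    apply hx0
    rw [← hsum, h, norm_eq_zero.mp hxpn, add_zero]
  obtain ⟨y, hyT, hyO⟩ := hex xm hJxm
  -- symmetry consequences
  have hsym1 : (inner ℂ y (J xm) : ℂ) = inner ℂ xm (J y) := hTsym hyT (xm, y) hyT
  have hconj1 : (inner ℂ xm (J y) : ℂ) = starRingEnd ℂ (inner ℂ y (J xm)) := by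
    rw [← hJs y xm]
    exact (inner_conj_symm _ _).symm
  have him_z : (inner ℂ y (J xm) : ℂ).im = 0 :=
    Complex.conj_eq_iff_im.mp (by rw [← hconj1]; exact hsym1.symm)
  have hyxm_real : (inner ℂ y xm : ℂ).im = 0 := by
    have h4 := him_z
    rw [hJxm, inner_neg_right] at h4
    simpa using h4
  have hd_real : (inner ℂ xm (J y) : ℂ).im = 0 := by
    rw [hconj1, Complex.conj_im, him_z, neg_zero]
  -- the key identity from dissipativity
  have hkey : (inner ℂ x (J y) : ℂ) = starRingEnd ℂ (l * inner ℂ xm (J x)) := by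
    apply imLin_aux (s := (l * ((‖xp‖ ^ 2 - ‖xm‖ ^ 2 : ℝ) : ℂ)).im)
    intro μ
    have hmemT0 : ((x, l • x) + μ • (xm, y)) ∈ (T0 : Set (H × H)) :=
      T0.add_mem hxT0 (T0.smul_mem μ (hsub hyT))
    have hd := hdis _ hmemT0
    have hfst : ((x, l • x) + μ • (xm, y)).1 = x + μ • xm := rfl
    have hsnd : ((x, l • x) + μ • (xm, y)).2 = l • x + μ • y := rfl
    rw [kip, hfst, hsnd] at hd
    have hexp : (inner ℂ (x + μ • xm) (J (l • x + μ • y)) : ℂ)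
        = l * inner ℂ x (J x)
          + (μ * inner ℂ x (J y) + starRingEnd ℂ μ * (l * inner ℂ xm (J x)))
          + starRingEnd ℂ μ * μ * inner ℂ xm (J y) := by
      simp only [map_add, map_smul, inner_add_left, inner_add_right,
        inner_smul_left, inner_smul_right]
      ring
    rw [hexp] at hd
    have h3 : (starRingEnd ℂ μ * μ * (inner ℂ xm (J y) : ℂ)).im = 0 := by
      rw [← Complex.normSq_eq_conj_mul_self, Complex.mul_im, hd_real]
      simp
    rw [Complex.add_im, Complex.add_im, h3, add_zero, hc0] at hd
    exact hd
  have hkey2 : (inner ℂ y (J x) : ℂ) = l * inner ℂ xm (J x) := by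
    have h5 : starRingEnd ℂ (inner ℂ x (J y) : ℂ) = l * inner ℂ xm (J x) := by
      rw [hkey]
      simp
    calc (inner ℂ y (J x) : ℂ) = inner ℂ (J y) x := (hJs y x).symm
      _ = starRingEnd ℂ (inner ℂ x (J y)) := (inner_conj_symm (J y) x).symm
      _ = l * inner ℂ xm (J x) := h5
  have hb : (inner ℂ xm (J x) : ℂ) = -((‖xm‖ ^ 2 : ℝ) : ℂ) := by
    rw [hJx, inner_sub_right, horth, inner_self_eq_norm_sq_to_K]
    rw [show ((↑) : ℝ → ℂ) = (algebraMap ℝ ℂ : ℝ → ℂ) from Complex.coe_algebraMap.symm]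
    push_cast
    ring
  have heq : (inner ℂ y xp : ℂ) - inner ℂ y xm = l * (-((‖xm‖ ^ 2 : ℝ) : ℂ)) := by
    rw [← inner_sub_right, ← hJx, hkey2, hb]
  have him : (inner ℂ y xp : ℂ).im = -(l.im * ‖xm‖ ^ 2) := by
    have h6 := congrArg Complex.im heq
    rw [Complex.sub_im, hyxm_real, sub_zero] at h6
    rw [h6]
    simp [Complex.mul_im, ← Complex.ofReal_pow]
  have hxm_pos : (0 : ℝ) < ‖xm‖ := norm_pos_iff.mpr hxm0
  have hxp_le : ‖xp‖ ≤ ‖xm‖ := by nlinarith [norm_nonneg xp, norm_nonneg xm, hple]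
  have habs : |l.im| * ‖xm‖ ^ 2 ≤ ‖y‖ * ‖xm‖ := by
    have h7 : |(inner ℂ y xp : ℂ).im| ≤ ‖y‖ * ‖xp‖ := by
      refine le_trans (Complex.abs_im_le_norm _) ?_
      have := norm_inner_le_norm (𝕜 := ℂ) y xp
      simpa using this
    rw [him, abs_neg, abs_mul, _root_.abs_of_nonneg (by positivity : (0:ℝ) ≤ ‖xm‖ ^ 2)] at h7
    calc |l.im| * ‖xm‖ ^ 2 ≤ ‖y‖ * ‖xp‖ := h7
      _ ≤ ‖y‖ * ‖xm‖ := mul_le_mul_of_nonneg_left hxp_le (norm_nonneg y)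
  -- the normalized pair gives an element of the defining set of normTsPm
  set c : ℂ := ((‖xm‖⁻¹ : ℝ) : ℂ) with hcdef
  have hcT : (c • xm, c • y) ∈ (T : Set (H × H)) := by
    have := T.smul_mem c hyT
    simpa using this
  have hcneg : c • xm ∈ negSet J := by
    show J (c • xm) = -(c • xm)
    rw [map_smul, hJxm, smul_neg]
  have hcnorm : ‖c • xm‖ = 1 := by
    rw [norm_smul, hcdef, Complex.norm_real, Real.norm_eq_abs,
      _root_.abs_of_nonneg (inv_nonneg.mpr (norm_nonneg xm)), inv_mul_cancel₀ hxm_pos.ne']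
  have hcorth : ∀ z ∈ mulSet (T : Set (H × H)), (inner ℂ (c • y) z : ℂ) = 0 := by
    intro z hz
    have hzM : z ∈ M := hz
    have hzy : (inner ℂ z y : ℂ) = 0 := (Submodule.mem_orthogonal M y).mp hyO z hzM
    have hy0 : (inner ℂ y z : ℂ) = 0 := by
      rw [← inner_conj_symm, hzy, map_zero]
    rw [inner_smul_left, hy0, mul_zero]
  have hrS : ‖c • y‖ ∈ {r | ∃ p ∈ opPart (T : Set (H × H)),
      p.1 ∈ negSet J ∧ ‖p.1‖ ≤ 1 ∧ r = ‖p.2‖} :=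
    ⟨(c • xm, c • y), ⟨hcT, hcorth⟩, hcneg, le_of_eq hcnorm, rfl⟩
  have hrm : ‖c • y‖ ≤ normTsPm J (T : Set (H × H)) := le_csSup hbdd hrS
  have hcy : ‖c • y‖ = ‖xm‖⁻¹ * ‖y‖ := by
    rw [norm_smul, hcdef, Complex.norm_real, Real.norm_eq_abs,
      _root_.abs_of_nonneg (inv_nonneg.mpr (norm_nonneg xm))]
  have hfin : |l.im| ≤ ‖xm‖⁻¹ * ‖y‖ := by
    rw [inv_mul_eq_div, le_div_iff₀ hxm_pos]
    nlinarith [habs, hxm_pos]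
  rw [hcy] at hrm
  linarith [hm, hfin, hrm]
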